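/- Let A be the 2m×2m invertible block matrix [[Σ₀ + Ω_z, Σ_{0t}],[Σ_{t0}, Σ_t]] and B the block matrix [[Σ_x, Σ_x],[Σ_x, Σ_x]], where all blocks are m×m real matrices, Σ_t is invertible, and the Schur complement S := (Σ₀ + Ω_z) − Σ_{0t}Σ_t⁻¹Σ_{t0} is invertible. Then det(I_{2m} + A⁻¹B) = det(I_m + [Σ_t⁻¹ + (I − Σ_t⁻¹Σ_{t0}) S⁻¹ (I − Σ_{0t}Σ_t⁻¹)] Σ_x). -/

import Mathlib

open Matrix

/-- For A = [[Σ₀ + Ω_z, Σ₀ₜ],[Σₜ₀, Σₜ]] invertible, B = [[Σₓ, Σₓ],[Σₓ, Σₓ]],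
with Σₜ invertible and the Schur complement S := (Σ₀ + Ω_z) − Σ₀ₜ Σₜ⁻¹ Σₜ₀ invertible,
det(I₂ₘ + A⁻¹B) = det(Iₘ + [Σₜ⁻¹ + (I − Σₜ⁻¹Σₜ₀) S⁻¹ (I − Σ₀ₜΣₜ⁻¹)] Σₓ). -/
theorem det_relevance_identity {m : ℕ}
    (S0 S0t St0 St Oz Sx : Matrix (Fin m) (Fin m) ℝ)
    (hSt : IsUnit St.det)
    (hS : IsUnit ((S0 + Oz) - S0t * St⁻¹ * St0).det)
    (hA : IsUnit (Matrix.fromBlocks (S0 + Oz) S0t St0 St).det) :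
    (1 + (Matrix.fromBlocks (S0 + Oz) S0t St0 St)⁻¹ *
        (Matrix.fromBlocks Sx Sx Sx Sx)).det =
      (1 + (St⁻¹ + (1 - St⁻¹ * St0) * ((S0 + Oz) - S0t * St⁻¹ * St0)⁻¹ *
        (1 - S0t * St⁻¹)) * Sx).det := by
  letI iSt : Invertible St := St.invertibleOfIsUnitDet hSt
  have hinvSt : ⅟St = St⁻¹ := invOf_eq_nonsing_inv St
  letI iS : Invertible ((S0 + Oz) - S0t * ⅟St * St0) := by
    rw [hinvSt]; exact Matrix.invertibleOfIsUnitDet _ hS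
  letI iA : Invertible (Matrix.fromBlocks (S0 + Oz) S0t St0 St) :=
    Matrix.fromBlocks₂₂Invertible _ _ _ _
  have hX : (S0 + Oz) - S0t * ⅟St * St0 = (S0 + Oz) - S0t * St⁻¹ * St0 := by rw [hinvSt]
  have hinvS : ⅟((S0 + Oz) - S0t * ⅟St * St0) = ((S0 + Oz) - S0t * St⁻¹ * St0)⁻¹ := by
    rw [invOf_eq_nonsing_inv, hX]
  have hAinv : (Matrix.fromBlocks (S0 + Oz) S0t St0 St)⁻¹ =
      ⅟(Matrix.fromBlocks (S0 + Oz) S0t St0 St) :=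
    (invOf_eq_nonsing_inv _).symm
  rw [hAinv, invOf_fromBlocks₂₂_eq]
  have hB : (Matrix.fromBlocks Sx Sx Sx Sx : Matrix (Fin m ⊕ Fin m) (Fin m ⊕ Fin m) ℝ) =
      Matrix.fromRows (1 : Matrix (Fin m) (Fin m) ℝ) 1 * Matrix.fromCols Sx Sx := by
    rw [Matrix.fromRows_mul_fromCols]
    simp
  rw [hB, ← Matrix.mul_assoc, Matrix.det_one_add_mul_comm, ← Matrix.mul_assoc,
    Matrix.fromCols_mul_fromBlocks, Matrix.fromCols_mul_fromRows,
    Matrix.det_one_add_mul_comm]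
  congr 1
  rw [hinvS, hinvSt]
  set T := St⁻¹
  set V := ((S0 + Oz) - S0t * St⁻¹ * St0)⁻¹
  noncomm_ring
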